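/- Let P be a very ample lattice polytope. If P is not normal, then k_P ≥ m_P ≥ d_P + 1. -/

import Mathlib

open Finset Pointwise

noncomputable section

/-- Lattice points: `ZL N = ℤ^N`. -/
abbrev ZL (N : ℕ) := Fin N → ℤ

/-- Embedding of the lattice into `ℝ^N`. -/
def toR {N : ℕ} (x : ZL N) : Fin N → ℝ := fun i => (x i : ℝ)

/-- The lattice polytope spanned by a finite set `V` of lattice points. -/
def poly {N : ℕ} (V : Finset (ZL N)) : Set (Fin N → ℝ) :=
  convexHull ℝ (toR '' (V : Set (ZL N)))

/-- The lattice points of the dilate `k • P`. -/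
def latPts {N : ℕ} (V : Finset (ZL N)) (k : ℕ) : Set (ZL N) :=
  {x | toR x ∈ (k : ℝ) • poly V}

/-- `P` is `k`-normal: every lattice point of `kP` is a sum of `k` lattice points of `P`. -/
def kNormal {N : ℕ} (V : Finset (ZL N)) (k : ℕ) : Prop :=
  ∀ x ∈ latPts V k, ∃ f : Fin k → ZL N, (∀ i, f i ∈ latPts V 1) ∧ ∑ i, f i = x

/-- `P` is normal. -/
def NormalPoly {N : ℕ} (V : Finset (ZL N)) : Prop := ∀ k, 1 ≤ k → kNormal V k

/-- The set of which `d_P` is the least element. -/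
def dSet {N : ℕ} (V : Finset (ZL N)) : Set ℕ :=
  {n | 0 < n ∧ ∀ k ≥ n, latPts V (k + 1) = latPts V 1 + latPts V k}

/-- The set of which the `k`-normality threshold `k_P` is the least element. -/
def kSet {N : ℕ} (V : Finset (ZL N)) : Set ℕ :=
  {K | 0 < K ∧ ∀ k ≥ K, kNormal V k}

/-- The set of which `ν_P` is the least element. -/
def nuSet {N : ℕ} (V : Finset (ZL N)) : Set ℕ :=
  {n | 0 < n ∧ ∀ k ≥ n, latPts V (k + 1) = (V : Set (ZL N)) + latPts V k}

/-- `v` is a vertex of `P`. -/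
def IsVertex {N : ℕ} (V : Finset (ZL N)) (v : ZL N) : Prop :=
  v ∈ V ∧ toR v ∈ Set.extremePoints ℝ (poly V)

/-- `P` is very ample: for every vertex `v`, every lattice point of the cone
`ℝ_{≥0}(P - v)` is a finite sum of elements `w - v` with `w ∈ P ∩ M`. -/
def VeryAmple {N : ℕ} (V : Finset (ZL N)) : Prop :=
  ∀ v, IsVertex V v → ∀ u : ZL N,
    (∃ c : ℝ, 0 ≤ c ∧ ∃ p ∈ poly V, toR u = c • (p - toR v)) →
    ∃ (m : ℕ) (w : Fin m → ZL N), (∀ i, w i ∈ latPts V 1) ∧ u = ∑ i, (w i - v)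

/-- The set of numbers `m` such that `x - d_P v` is a sum of `m` elements of `(P ∩ M) - v`;
`σ(x, d_P v)` is its least element. -/
def sigmaSet {N : ℕ} (V : Finset (ZL N)) (dP : ℕ) (x v : ZL N) : Set ℕ :=
  {m | ∃ w : Fin m → ZL N, (∀ i, w i ∈ latPts V 1) ∧ x - dP • v = ∑ i, (w i - v)}

/-- The set of all values `σ(x, d_P v)`; `m_P` is its greatest element. -/
def mSet {N : ℕ} (V : Finset (ZL N)) (dP : ℕ) : Set ℕ :=
  {s | ∃ x ∈ latPts V dP, ∃ v, IsVertex V v ∧ IsLeast (sigmaSet V dP x v) s}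

end

namespace Stmt8Aux

variable {N : ℕ} {V : Finset (ZL N)}

lemma toR_add (a b : ZL N) : toR (a + b) = toR a + toR b := by
  funext i; simp [toR]

lemma toR_sub (a b : ZL N) : toR (a - b) = toR a - toR b := by
  funext i; simp [toR]

lemma toR_nsmul (n : ℕ) (a : ZL N) : toR (n • a) = (n : ℝ) • toR a := by
  funext i; simp [toR]

lemma toR_zero : toR (0 : ZL N) = 0 := by
  funext i; simp [toR]

lemma mem_latPts_iff {x : ZL N} {k : ℕ} :
    x ∈ latPts V k ↔ ∃ p ∈ poly V, toR x = (k : ℝ) • p := by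
  constructor
  · rintro h
    rcases Set.mem_smul_set.1 h with ⟨p, hp, he⟩
    exact ⟨p, hp, he.symm⟩
  · rintro ⟨p, hp, he⟩
    exact Set.mem_smul_set.2 ⟨p, hp, he.symm⟩

lemma pair_add {x y : ZL N} {k l : ℕ} (hx : x ∈ latPts V k) (hy : y ∈ latPts V l) :
    x + y ∈ latPts V (k + l) := by
  rcases mem_latPts_iff.1 hx with ⟨p, hp, hxp⟩
  rcases mem_latPts_iff.1 hy with ⟨q, hq, hyq⟩
  rcases Nat.eq_zero_or_pos (k + l) with h0 | hpos
  · obtain ⟨hk, hl⟩ := Nat.add_eq_zero.mp h0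
    subst hk; subst hl
    refine mem_latPts_iff.2 ⟨p, hp, ?_⟩
    rw [toR_add, hxp, hyq]
    simp
  · have hc : ((k + l : ℕ) : ℝ) ≠ 0 := by positivity
    have ha : (0:ℝ) ≤ (k : ℝ) / ((k+l : ℕ) : ℝ) := by positivity
    have hb : (0:ℝ) ≤ (l : ℝ) / ((k+l : ℕ) : ℝ) := by positivity
    have hab : (k : ℝ) / ((k+l : ℕ) : ℝ) + (l : ℝ) / ((k+l : ℕ) : ℝ) = 1 := by
      rw [← add_div, div_eq_one_iff_eq hc]
      push_cast; ring
    have hmem : ((k : ℝ) / ((k+l : ℕ) : ℝ)) • p + ((l : ℝ) / ((k+l : ℕ) : ℝ)) • q ∈ poly V :=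
      (convex_convexHull ℝ _) hp hq ha hb hab
    refine mem_latPts_iff.2 ⟨_, hmem, ?_⟩
    rw [toR_add, hxp, hyq, smul_add, smul_smul, smul_smul]
    rw [mul_div_cancel₀ _ hc, mul_div_cancel₀ _ hc]

lemma mem_latPts_one_of_mem {v : ZL N} (hv : v ∈ V) : v ∈ latPts V 1 := by
  refine mem_latPts_iff.2 ⟨toR v, ?_, by simp⟩
  exact subset_convexHull ℝ _ ⟨v, hv, rfl⟩

lemma nsmul_mem {v : ZL N} (hv : v ∈ latPts V 1) (n : ℕ) : n • v ∈ latPts V n := by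
  rcases mem_latPts_iff.1 hv with ⟨p, hp, he⟩
  refine mem_latPts_iff.2 ⟨p, hp, ?_⟩
  rw [toR_nsmul, he]
  simp [smul_smul]

lemma sum_mem (hne : (poly V).Nonempty) :
    ∀ (n : ℕ) (f : Fin n → ZL N), (∀ i, f i ∈ latPts V 1) → ∑ i, f i ∈ latPts V n := by
  intro n
  induction n with
  | zero =>
    intro f _
    rcases hne with ⟨p, hp⟩
    refine mem_latPts_iff.2 ⟨p, hp, ?_⟩
    simp [toR_zero]
  | succ n ih =>
    intro f hf
    rw [Fin.sum_univ_succ]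
    have := pair_add (k := 1) (l := n) (hf 0) (ih (fun i => f i.succ) (fun i => hf i.succ))
    rwa [Nat.add_comm 1 n] at this

lemma kNormal_one : kNormal V 1 := by
  intro x hx
  exact ⟨fun _ => x, fun _ => hx, by simp⟩

lemma kNormal_of_add (d : ℕ) (base : kNormal V d)
    (hadd : ∀ k ≥ d, latPts V (k + 1) = latPts V 1 + latPts V k) :
    ∀ k ≥ d, kNormal V k := by
  intro k hk
  induction k, hk using Nat.le_induction with
  | base => exact base
  | succ k hk ih =>
    intro x hx
    rw [hadd k hk] at hx
    rcases Set.mem_add.1 hx with ⟨a, ha, b, hb, hab⟩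
    rcases ih b hb with ⟨f, hf, hsum⟩
    refine ⟨Fin.cons a f, ?_, ?_⟩
    · intro i
      refine Fin.cases ha (fun j => hf j) i
    · rw [Fin.sum_cons, hsum, hab]

lemma vertex_exists (hne : (poly V).Nonempty) : ∃ v, IsVertex V v := by
  have hcomp : IsCompact (poly V) :=
    (V.finite_toSet.image toR).isCompact_convexHull ℝ
  rcases hcomp.extremePoints_nonempty hne with ⟨p, hp⟩
  have hsub : Set.extremePoints ℝ (poly V) ⊆ toR '' (V : Set (ZL N)) :=
    extremePoints_convexHull_subset
  rcases hsub hp with ⟨v, hv, rfl⟩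
  exact ⟨v, hv, hp⟩

lemma sigma_nonempty (hva : VeryAmple V) {dP : ℕ} {x v : ZL N}
    (hx : x ∈ latPts V dP) (hv : IsVertex V v) :
    (sigmaSet V dP x v).Nonempty := by
  rcases mem_latPts_iff.1 hx with ⟨p, hp, he⟩
  have hprem : ∃ c : ℝ, 0 ≤ c ∧ ∃ q ∈ poly V, toR (x - dP • v) = c • (q - toR v) := by
    refine ⟨(dP : ℝ), by positivity, p, hp, ?_⟩
    rw [toR_sub, toR_nsmul, he, smul_sub]
  rcases hva v hv _ hprem with ⟨m, w, hw, heq⟩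
  exact ⟨m, w, hw, heq⟩

lemma sum_sub_const {n : ℕ} (w : Fin n → ZL N) (v : ZL N) :
    ∑ i, (w i - v) = (∑ i, w i) - n • v := by
  rw [Finset.sum_sub_distrib, Finset.sum_const, Finset.card_univ, Fintype.card_fin]

end Stmt8Aux

/-- If a very ample lattice polytope `P` is not normal, then
`k_P ≥ m_P ≥ d_P + 1`. -/
theorem stmt8 {N : ℕ} (V : Finset (ZL N)) (dP kP mP : ℕ)
    (hva : VeryAmple V)
    (hdP : IsLeast (dSet V) dP)
    (hkP : IsLeast (kSet V) kP)
    (hmP : IsGreatest (mSet V dP) mP)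
    (hnn : ¬ NormalPoly V) :
    mP ≤ kP ∧ dP + 1 ≤ mP := by
  classical
  have hdpos : 0 < dP := hdP.1.1
  have hadd := hdP.1.2
  -- dP ≥ 2, else P is normal
  have hd2 : 2 ≤ dP := by
    by_contra h
    have hd1 : dP = 1 := by omega
    apply hnn
    intro k hk
    refine Stmt8Aux.kNormal_of_add 1 Stmt8Aux.kNormal_one ?_ k hk
    rw [hd1] at hadd; exact hadd
  -- Part 2 : dP + 1 ≤ mP
  have hpart2 : dP + 1 ≤ mP := by
    by_contra hcon
    have hmle : mP ≤ dP := by omega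
    have hmem : dP - 1 ∈ dSet V := by
      refine ⟨by omega, ?_⟩
      intro k hk
      rcases Nat.lt_or_ge k dP with hklt | hkge
      · have hkeq : k = dP - 1 := by omega
        subst hkeq
        rw [show dP - 1 + 1 = dP by omega]
        ext x
        constructor
        · intro hx
          have hne : (poly V).Nonempty := by
            rcases Stmt8Aux.mem_latPts_iff.1 hx with ⟨p, hp, _⟩
            exact ⟨p, hp⟩
          rcases Stmt8Aux.vertex_exists hne with ⟨v, hv⟩
          have hvm : v ∈ latPts V 1 := Stmt8Aux.mem_latPts_one_of_mem hv.1
          have hsne := Stmt8Aux.sigma_nonempty hva hx hv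
          obtain ⟨s, hleast⟩ : ∃ s, IsLeast (sigmaSet V dP x v) s :=
            ⟨sInf _, Nat.sInf_mem hsne, fun b hb => Nat.sInf_le hb⟩
          have hsle : s ≤ dP := le_trans (hmP.2 ⟨x, hx, v, hv, hleast⟩) hmle
          obtain ⟨w, hw, hsum⟩ := hleast.1
          have hxeq : x = (∑ i, w i) + (dP - s) • v := by
            have h1 : x - dP • v = (∑ i, w i) - s • v := by
              rw [hsum, Stmt8Aux.sum_sub_const]
            have h2 : (dP - s) • v + s • v = dP • v := by
              rw [← add_nsmul]
              congr 1
              omega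
            have h3 : x = (∑ i, w i) - s • v + dP • v := by
              rw [← h1]; abel
            rw [h3, ← h2]; abel
          rcases s with _ | s'
          · simp only [Finset.univ_eq_empty, Finset.sum_empty, zero_add, Nat.sub_zero] at hxeq
            refine Set.mem_add.2 ⟨v, hvm, (dP - 1) • v, Stmt8Aux.nsmul_mem hvm _, ?_⟩
            have h2 : (1 : ℕ) • v + (dP - 1) • v = dP • v := by
              rw [← add_nsmul]
              congr 1
              omega
            rw [hxeq, ← h2, one_nsmul]
          · have hb : (∑ i : Fin s', w i.succ) + (dP - (s' + 1)) • v ∈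
                latPts V (s' + (dP - (s' + 1))) :=
              Stmt8Aux.pair_add
                (Stmt8Aux.sum_mem hne s' (fun i => w i.succ) (fun i => hw i.succ))
                (Stmt8Aux.nsmul_mem hvm _)
            rw [show s' + (dP - (s' + 1)) = dP - 1 by omega] at hb
            refine Set.mem_add.2 ⟨w 0, hw 0, _, hb, ?_⟩
            rw [hxeq, Fin.sum_univ_succ, add_assoc]
        · intro hx
          rcases Set.mem_add.1 hx with ⟨a, ha, b, hb, hab⟩
          have := Stmt8Aux.pair_add ha hb
          rw [show 1 + (dP - 1) = dP by omega] at this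
          rw [← hab]
          exact this
      · exact hadd k hkge
    have := hdP.2 hmem
    omega
  -- Part 1 : mP ≤ kP
  have hpart1 : mP ≤ kP := by
    by_contra hcon
    have hk : kP ≤ mP - 1 := by omega
    have hnorm : kNormal V (mP - 1) := hkP.1.2 _ hk
    obtain ⟨x, hx, v, hv, hleast⟩ := hmP.1
    have hvm : v ∈ latPts V 1 := Stmt8Aux.mem_latPts_one_of_mem hv.1
    have hz : x + (mP - 1 - dP) • v ∈ latPts V (mP - 1) := by
      have := Stmt8Aux.pair_add hx (Stmt8Aux.nsmul_mem hvm (mP - 1 - dP))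
      rwa [show dP + (mP - 1 - dP) = mP - 1 by omega] at this
    rcases hnorm _ hz with ⟨f, hf, hsum⟩
    have hmm : (mP - 1) ∈ sigmaSet V dP x v := by
      refine ⟨f, hf, ?_⟩
      rw [Stmt8Aux.sum_sub_const, hsum]
      have h2 : (mP - 1 - dP) • v + dP • v = (mP - 1) • v := by
        rw [← add_nsmul]
        congr 1
        omega
      rw [← h2]
      abel
    have := hleast.2 hmm
    omega
  exact ⟨hpart1, hpart2⟩
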